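/- Let G be the incidence graph of a finite projective plane of order q (vertices are the q^2+q+1 points and q^2+q+1 lines, with a point adjacent to a line iff the point lies on the line). Then the cop number of G is at least q+1. -/

import Mathlib

open SimpleGraph

variable {V : Type*}

/-- A strategy for `m` cops on the graph `G`: initial positions, and a move
function depending on current cop positions and the robber's position.
Each cop may stay or move to an adjacent vertex. -/
structure CopStrategy (G : SimpleGraph V) (m : ℕ) where
  init : Fin m → V
  move : (Fin m → V) → V → (Fin m → V)
  valid : ∀ c r i, move c r i = c i ∨ G.Adj (c i) (move c r i)

/-- A strategy for the robber: an initial position chosen after seeing the cops'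
initial positions, and a move function. The robber may stay or move to an
adjacent vertex. -/
structure RobberStrategy (G : SimpleGraph V) (m : ℕ) where
  init : (Fin m → V) → V
  move : (Fin m → V) → V → V
  valid : ∀ c r, move c r = r ∨ G.Adj r (move c r)

/-- The play of the game: at time `n`, `(play CS RS n).1` are the cops' positions
and `(play CS RS n).2` is the robber's position (cops move first in each round). -/
def play {G : SimpleGraph V} {m : ℕ} (CS : CopStrategy G m) (RS : RobberStrategy G m) :
    ℕ → (Fin m → V) × V
  | 0 => (CS.init, RS.init CS.init)
  | n + 1 =>
      let p := play CS RS n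
      let c := CS.move p.1 p.2
      (c, RS.move c p.2)

/-- The cops win if some cop lands on the robber's current vertex. -/
def CopsWin (G : SimpleGraph V) (m : ℕ) : Prop :=
  ∃ CS : CopStrategy G m, ∀ RS : RobberStrategy G m,
    ∃ n i, (play CS RS (n + 1)).1 i = (play CS RS n).2

/-- The cop number: the least number of cops having a winning strategy. -/
noncomputable def copNumber (G : SimpleGraph V) : ℕ := sInf {m | CopsWin G m}

open Configuration

/-- The incidence graph of a point-line configuration: vertices are points and lines,
with a point adjacent to a line iff the point lies on the line. -/
def incidenceGraph (P L : Type*) [Membership P L] : SimpleGraph (P ⊕ L) where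
  Adj x y :=
    match x, y with
    | Sum.inl p, Sum.inr l => p ∈ l
    | Sum.inr l, Sum.inl p => p ∈ l
    | _, _ => False
  symm := by
    exact ⟨by rintro (p | l) (p' | l') h <;> simp_all⟩
  loopless := ⟨by rintro (p | l) h <;> simp_all⟩

section AuxProj

open Configuration

variable {P L : Type*} [Membership P L]

@[simp] lemma incidenceGraph_adj_inl_inr {p : P} {l : L} :
    (incidenceGraph P L).Adj (Sum.inl p) (Sum.inr l) ↔ p ∈ l := Iff.rfl

@[simp] lemma incidenceGraph_adj_inr_inl {p : P} {l : L} :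
    (incidenceGraph P L).Adj (Sum.inr l) (Sum.inl p) ↔ p ∈ l := Iff.rfl

@[simp] lemma incidenceGraph_adj_inl_inl {p p' : P} :
    ¬ (incidenceGraph P L).Adj (Sum.inl p) (Sum.inl p' : P ⊕ L) := fun h => h

@[simp] lemma incidenceGraph_adj_inr_inr {l l' : L} :
    ¬ (incidenceGraph P L).Adj (Sum.inr l : P ⊕ L) (Sum.inr l') := fun h => h

set_option linter.unusedSectionVars false

variable [Fintype P] [Fintype L] [ProjectivePlane P L]

lemma nbhd_card (r : P ⊕ L) :
    Nat.card {v : P ⊕ L // (incidenceGraph P L).Adj r v}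
      = ProjectivePlane.order P L + 1 := by
  rcases r with p | l
  · rw [← ProjectivePlane.lineCount_eq (L := L) p]
    refine Nat.card_congr ?_
    exact
      { toFun := fun v => match v with
          | ⟨Sum.inr l, h⟩ => ⟨l, h⟩
          | ⟨Sum.inl _, h⟩ => h.elim
        invFun := fun l => ⟨Sum.inr l.1, l.2⟩
        left_inv := by
          rintro ⟨p' | l', h⟩
          · exact h.elim
          · rfl
        right_inv := fun l => rfl }
  · rw [← ProjectivePlane.pointCount_eq (P := P) l]
    refine Nat.card_congr ?_
    exact
      { toFun := fun v => match v with
          | ⟨Sum.inl p, h⟩ => ⟨p, h⟩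
          | ⟨Sum.inr _, h⟩ => h.elim
        invFun := fun p => ⟨Sum.inl p.1, p.2⟩
        left_inv := by
          rintro ⟨p' | l', h⟩
          · rfl
          · exact h.elim
        right_inv := fun p => rfl }

lemma forbid {r u v x : P ⊕ L} (hu : (incidenceGraph P L).Adj r u)
    (hv : (incidenceGraph P L).Adj r v) (huv : u ≠ v) (hx : x ≠ r)
    (h1 : x = u ∨ (incidenceGraph P L).Adj x u)
    (h2 : x = v ∨ (incidenceGraph P L).Adj x v) : False := by
  rcases r with p | l
  · rcases u with p₁ | l₁
    · exact hu
    rcases v with p₂ | l₂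
    · exact hv
    have hl : l₁ ≠ l₂ := fun h => huv (by rw [h])
    rcases h1 with rfl | h1
    · rcases h2 with h2 | h2
      · exact hl (Sum.inr.inj h2)
      · exact h2
    · rcases x with p' | l'
      swap
      · exact h1
      rcases h2 with h2 | h2
      · exact absurd h2 (by simp)
      have hp : p ≠ p' := fun h => hx (by rw [h])
      rcases Nondegenerate.eq_or_eq (p₁ := p) (p₂ := p') (l₁ := l₁) (l₂ := l₂)
        hu h1 hv h2 with h | h
      · exact hp h
      · exact hl h
  · rcases u with p₁ | l₁
    swap
    · exact hu
    rcases v with p₂ | l₂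
    swap
    · exact hv
    have hp : p₁ ≠ p₂ := fun h => huv (by rw [h])
    rcases h1 with rfl | h1
    · rcases h2 with h2 | h2
      · exact hp (Sum.inl.inj h2)
      · exact h2
    · rcases x with p' | l'
      · exact h1
      rcases h2 with h2 | h2
      · exact absurd h2 (by simp)
      have hll : l ≠ l' := fun h => hx (by rw [h])
      rcases Nondegenerate.eq_or_eq (p₁ := p₁) (p₂ := p₂) (l₁ := l) (l₂ := l')
        hu hv h1 h2 with h | h
      · exact hp h
      · exact hll h

lemma exists_safe_move {m : ℕ} (hm : m ≤ ProjectivePlane.order P L)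
    (c : Fin m → P ⊕ L) (r : P ⊕ L) (hc : ∀ i, c i ≠ r) :
    ∃ v, (incidenceGraph P L).Adj r v ∧
      ∀ i, c i ≠ v ∧ ¬(incidenceGraph P L).Adj (c i) v := by
  classical
  by_contra h
  push_neg at h
  haveI : Fintype {v : P ⊕ L // (incidenceGraph P L).Adj r v} := Fintype.ofFinite _
  have hcard : Fintype.card (Fin m)
      < Fintype.card {v : P ⊕ L // (incidenceGraph P L).Adj r v} := by
    rw [Fintype.card_fin, ← Nat.card_eq_fintype_card, nbhd_card]
    omega
  have hch : ∀ v : {v : P ⊕ L // (incidenceGraph P L).Adj r v},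
      ∃ i, c i = v.1 ∨ (incidenceGraph P L).Adj (c i) v.1 := by
    intro v
    obtain ⟨i, hi⟩ := h v.1 v.2
    exact ⟨i, or_iff_not_imp_left.mpr hi⟩
  obtain ⟨u, v, huv, heq⟩ :=
    Fintype.exists_ne_map_eq_of_card_lt (fun v => (hch v).choose) hcard
  have h1 := (hch u).choose_spec
  have h2 := (hch v).choose_spec
  rw [heq] at h1
  exact forbid u.2 v.2 (fun h' => huv (Subtype.ext h')) (hc _) h1 h2

lemma exists_safe {m : ℕ} (hm : m ≤ ProjectivePlane.order P L) (c : Fin m → P ⊕ L) :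
    ∃ v, ∀ i, c i ≠ v ∧ ¬(incidenceGraph P L).Adj (c i) v := by
  have hcard : m < Fintype.card (P ⊕ L) := by
    have h1 := ProjectivePlane.card_points P L
    rw [Fintype.card_sum]
    have : 0 ≤ ProjectivePlane.order P L ^ 2 := Nat.zero_le _
    set a := ProjectivePlane.order P L ^ 2
    omega
  obtain ⟨w, hw⟩ : ∃ w, ∀ i, c i ≠ w := by
    by_contra h
    push_neg at h
    have hs : Function.Surjective c := fun w => (h w)
    have := Fintype.card_le_of_surjective c hs
    rw [Fintype.card_fin] at this
    omega
  obtain ⟨v, -, hv⟩ := exists_safe_move hm c w hw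
  exact ⟨v, hv⟩

end AuxProj

/-- The cop number of the incidence graph of a finite projective plane of order `q`
is at least `q + 1`. -/
theorem copNumber_incidenceGraph_projectivePlane
    (P L : Type*) [Membership P L] [Fintype P] [Fintype L]
    [ProjectivePlane P L] :
    ProjectivePlane.order P L + 1 ≤ copNumber (incidenceGraph P L) := by
  classical
  have hwin : CopsWin (incidenceGraph P L) (Fintype.card (P ⊕ L)) := by
    let e := (Fintype.equivFin (P ⊕ L)).symm
    refine ⟨⟨e, fun c _ => c, fun c r i => Or.inl rfl⟩, fun RS => ⟨0, e.symm (RS.init e), ?_⟩⟩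
    show e (e.symm (RS.init e)) = RS.init e
    exact e.apply_symm_apply _
  refine le_csInf ⟨_, hwin⟩ fun m hm => ?_
  by_contra hlt
  push_neg at hlt
  have hmq : m ≤ ProjectivePlane.order P L := Nat.lt_succ_iff.mp hlt
  obtain ⟨CS, hCS⟩ := hm
  let RS : RobberStrategy (incidenceGraph P L) m :=
    { init := fun c => (exists_safe hmq c).choose
      move := fun c r =>
        if h : ∀ i, c i ≠ r then (exists_safe_move hmq c r h).choose else r
      valid := by
        intro c r
        split
        · exact Or.inr (exists_safe_move hmq c r ‹_›).choose_spec.1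
        · exact Or.inl rfl }
  have inv : ∀ n, ∀ i, (play CS RS n).1 i ≠ (play CS RS n).2 ∧
      ¬(incidenceGraph P L).Adj ((play CS RS n).1 i) ((play CS RS n).2) := by
    intro n
    induction n with
    | zero => exact (exists_safe hmq CS.init).choose_spec
    | succ n ih =>
      have hne : ∀ i, (CS.move (play CS RS n).1 (play CS RS n).2) i ≠ (play CS RS n).2 := by
        intro i
        rcases CS.valid (play CS RS n).1 (play CS RS n).2 i with h | h
        · rw [h]; exact (ih i).1
        · intro he; exact (ih i).2 (he ▸ h)
      have hplay : play CS RS (n + 1) =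
          (CS.move (play CS RS n).1 (play CS RS n).2,
           RS.move (CS.move (play CS RS n).1 (play CS RS n).2) (play CS RS n).2) := rfl
      rw [hplay]
      have hmove : RS.move (CS.move (play CS RS n).1 (play CS RS n).2) (play CS RS n).2
          = (exists_safe_move hmq _ _ hne).choose := dif_pos hne
      rw [hmove]
      exact (exists_safe_move hmq _ _ hne).choose_spec.2
  obtain ⟨n, i, hni⟩ := hCS RS
  have hne : ∀ i, (CS.move (play CS RS n).1 (play CS RS n).2) i ≠ (play CS RS n).2 := by
    intro i
    rcases CS.valid (play CS RS n).1 (play CS RS n).2 i with h | h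
    · rw [h]; exact (inv n i).1
    · intro he; exact (inv n i).2 (he ▸ h)
  exact hne i hni
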